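/- arXiv:1502.03239 — 3 statements merged into one kernel-verified Lean document; each statement's English description precedes it below -/
import Mathlib

section
/- Let K be an infinite-dimensional separable complex Hilbert space and let Ẑ₀ and Ẑ₁ be selfadjoint contractions on K with Ẑ₀ ≤ Ẑ₁ such that ran(Ẑ₁ − Ẑ₀)^{1/2} ∩ ran(I + Ẑ₀)^{1/2} = {0}, ran(Ẑ₁ − Ẑ₀)^{1/2} ∩ ran(I − Ẑ₁)^{1/2} = {0}, and ker(Ẑ₁ − Ẑ₀) = {0}. Then there exists a selfadjoint contraction X = [[X₁₁, X₁₂], [X₁₂*, X₂₂]] on K ⊕ K such that: (1) ran(I + X)^{1/2} ∩ ({0} ⊕ K) = {0} and ran(I − X)^{1/2} ∩ ({0} ⊕ K) = {0}; (2) ‖X₂₂‖ < 1; and (3) Ẑ₀ = X₁₁ − X₁₂ (I + X₂₂)^{-1} X₁₂* and Ẑ₁ = X₁₁ + X₁₂ (I − X₂₂)^{-1} X₁₂*. -/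
open ContinuousLinearMap Complex Filter
open scoped InnerProductSpace Topology

set_option synthInstance.maxHeartbeats 1000000
set_option maxHeartbeats 1000000

noncomputable section

variable {E F : Type*} [NormedAddCommGroup E] [InnerProductSpace ℂ E]
  [NormedAddCommGroup F] [InnerProductSpace ℂ F]

/-- The 2×2 block operator `[[A, B], [C, D]]` on the Hilbert space orthogonal direct sum
`E ⊕ F` (realized as `WithLp 2 (E × F)`), acting by `(e, f) ↦ (A e + B f, C e + D f)`. -/
def blk (A : E →L[ℂ] E) (B : F →L[ℂ] E) (C : E →L[ℂ] F) (D : F →L[ℂ] F) :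
    WithLp 2 (E × F) →L[ℂ] WithLp 2 (E × F) :=
  ((WithLp.prodContinuousLinearEquiv 2 ℂ E F).symm : E × F →L[ℂ] WithLp 2 (E × F)) ∘L
    ((A.coprod B).prod (C.coprod D)) ∘L
    ((WithLp.prodContinuousLinearEquiv 2 ℂ E F) : WithLp 2 (E × F) →L[ℂ] E × F)

/-- The isometric embedding of the first summand `E` into `E ⊕ F`. -/
def inl2 : E →L[ℂ] WithLp 2 (E × F) :=
  ((WithLp.prodContinuousLinearEquiv 2 ℂ E F).symm : E × F →L[ℂ] WithLp 2 (E × F)) ∘L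
    .inl ℂ E F

/-- The isometric embedding of the second summand `F` into `E ⊕ F`. -/
def inr2 : F →L[ℂ] WithLp 2 (E × F) :=
  ((WithLp.prodContinuousLinearEquiv 2 ℂ E F).symm : E × F →L[ℂ] WithLp 2 (E × F)) ∘L
    .inr ℂ E F

/-- The orthogonal projection of `E ⊕ F` onto the first summand `E`. -/
def fst2 : WithLp 2 (E × F) →L[ℂ] E :=
  .fst ℂ E F ∘L ((WithLp.prodContinuousLinearEquiv 2 ℂ E F) : WithLp 2 (E × F) →L[ℂ] E × F)

/-- The orthogonal projection of `E ⊕ F` onto the second summand `F`. -/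
def snd2 : WithLp 2 (E × F) →L[ℂ] F :=
  .snd ℂ E F ∘L ((WithLp.prodContinuousLinearEquiv 2 ℂ E F) : WithLp 2 (E × F) →L[ℂ] E × F)

/-- The element `(e, f)` of the orthogonal direct sum `E ⊕ F`. -/
def mk2 (e : E) (f : F) : WithLp 2 (E × F) :=
  (WithLp.prodContinuousLinearEquiv 2 ℂ E F).symm (e, f)

section blkLemmas

lemma blk_apply_fst (A : E →L[ℂ] E) (B : F →L[ℂ] E) (C : E →L[ℂ] F) (D : F →L[ℂ] F)
    (x : WithLp 2 (E × F)) : (blk A B C D x).fst = A x.fst + B x.snd := rfl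

lemma blk_apply_snd (A : E →L[ℂ] E) (B : F →L[ℂ] E) (C : E →L[ℂ] F) (D : F →L[ℂ] F)
    (x : WithLp 2 (E × F)) : (blk A B C D x).snd = C x.fst + D x.snd := rfl

lemma inr2_apply_fst (f : F) : (inr2 (E := E) f).fst = 0 := rfl
lemma inr2_apply_snd (f : F) : (inr2 (E := E) f).snd = f := rfl

omit [InnerProductSpace ℂ E] [InnerProductSpace ℂ F] in
lemma wlp_ext {x y : WithLp 2 (E × F)} (h1 : x.fst = y.fst) (h2 : x.snd = y.snd) : x = y :=
  WithLp.ofLp_injective 2 (Prod.ext h1 h2)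

lemma blk_add (A A' : E →L[ℂ] E) (B B' : F →L[ℂ] E) (C C' : E →L[ℂ] F) (D D' : F →L[ℂ] F) :
    blk A B C D + blk A' B' C' D' = blk (A+A') (B+B') (C+C') (D+D') := by
  ext x : 1
  exact wlp_ext (by simp [blk_apply_fst]; abel) (by simp [blk_apply_snd]; abel)

lemma blk_neg (A : E →L[ℂ] E) (B : F →L[ℂ] E) (C : E →L[ℂ] F) (D : F →L[ℂ] F) :
    -blk A B C D = blk (-A) (-B) (-C) (-D) := by
  ext x : 1
  exact wlp_ext (by simp [blk_apply_fst]; abel) (by simp [blk_apply_snd]; abel)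

lemma one_blk : (1 : WithLp 2 (E × F) →L[ℂ] WithLp 2 (E × F)) = blk 1 0 0 1 := by
  ext x : 1
  exact wlp_ext (by simp [blk_apply_fst]) (by simp [blk_apply_snd])

lemma blk_comp (A A' : E →L[ℂ] E) (B B' : F →L[ℂ] E) (C C' : E →L[ℂ] F) (D D' : F →L[ℂ] F) :
    blk A B C D ∘L blk A' B' C' D' =
      blk (A ∘L A' + B ∘L C') (A ∘L B' + B ∘L D') (C ∘L A' + D ∘L C') (C ∘L B' + D ∘L D') := by
  ext x : 1
  refine wlp_ext ?_ ?_ <;>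
    simp [blk_apply_fst, blk_apply_snd, ContinuousLinearMap.comp_apply] <;> abel

lemma blk_adjoint [CompleteSpace E] [CompleteSpace F]
    (A : E →L[ℂ] E) (B : F →L[ℂ] E) (C : E →L[ℂ] F) (D : F →L[ℂ] F) :
    adjoint (blk A B C D) = blk (adjoint A) (adjoint C) (adjoint B) (adjoint D) := by
  symm
  rw [eq_adjoint_iff]
  intro x y
  simp only [WithLp.prod_inner_apply, WithLp.ofLp_fst, WithLp.ofLp_snd, blk_apply_fst, blk_apply_snd, inner_add_left,
    inner_add_right, adjoint_inner_left]
  ring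

end blkLemmas

lemma douglas {H : Type*} [NormedAddCommGroup H] [InnerProductSpace ℂ H] [CompleteSpace H]
    (S : H →L[ℂ] H) (y : H) (c : ℝ) (h : ∀ x, ‖(⟪y, x⟫_ℂ)‖ ≤ c * ‖S x‖) :
    ∃ z, adjoint S z = y := by
  have key : ∀ {x x' : H}, S x = S x' → (⟪y, x⟫_ℂ) = ⟪y, x'⟫_ℂ := by
    intro x x' hxx
    have h0 : S (x - x') = 0 := by simp [map_sub, hxx]
    have := h (x - x')
    rw [h0] at this
    simp only [norm_zero, mul_zero] at this
    have hz : (⟪y, x - x'⟫_ℂ) = 0 := norm_le_zero_iff.mp this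
    rw [inner_sub_right, sub_eq_zero] at hz
    exact hz
  set p : Submodule ℂ H := LinearMap.range (S : H →ₗ[ℂ] H) with hp
  have hmem : ∀ x : H, S x ∈ p := fun x => LinearMap.mem_range.mpr ⟨x, rfl⟩
  have pick : ∀ v : p, ∃ x : H, S x = (v : H) := fun v => v.2
  set pk : p → H := fun v => (pick v).choose with hpk
  have hpkS : ∀ v : p, S (pk v) = (v : H) := fun v => (pick v).choose_spec
  set ψ : p →ₗ[ℂ] ℂ :=
    { toFun := fun v => ⟪y, pk v⟫_ℂ
      map_add' := fun v w => by
        show (⟪y, pk (v+w)⟫_ℂ) = (⟪y, pk v⟫_ℂ) + ⟪y, pk w⟫_ℂ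
        have h1 : S (pk (v + w)) = S (pk v + pk w) := by
          simp [hpkS, map_add]
        rw [key h1, inner_add_right]
      map_smul' := fun a v => by
        show (⟪y, pk (a • v)⟫_ℂ) = a • ⟪y, pk v⟫_ℂ
        have h1 : S (pk (a • v)) = S (a • pk v) := by
          simp [hpkS, map_smul]
        rw [key h1, inner_smul_right]
        rfl } with hψ
  have hbound : ∀ v : p, ‖ψ v‖ ≤ c * ‖v‖ := by
    intro v
    calc ‖ψ v‖ = ‖(⟪y, pk v⟫_ℂ)‖ := rfl
      _ ≤ c * ‖S (pk v)‖ := h _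
      _ = c * ‖v‖ := by rw [hpkS]; rfl
  set ψc : p →L[ℂ] ℂ := LinearMap.mkContinuous ψ c hbound with hψc
  obtain ⟨g, hg, -⟩ := exists_extension_norm_eq p ψc
  set z : H := (InnerProductSpace.toDual ℂ H).symm g with hz
  refine ⟨z, ?_⟩
  refine ext_inner_right ℂ fun x => ?_
  rw [adjoint_inner_left]
  have h1 : (⟪z, S x⟫_ℂ) = g (S x) := InnerProductSpace.toDual_symm_apply
  have h2 : g (S x) = ψc ⟨S x, hmem x⟩ := hg ⟨S x, hmem x⟩
  have h3 : ψc ⟨S x, hmem x⟩ = ⟪y, pk ⟨S x, hmem x⟩⟫_ℂ := rfl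
  rw [h1, h2, h3, key (hpkS ⟨S x, hmem x⟩)]

/-- Key range lemma: if `M = (blk S 0 B 1)* ∘ (blk S 0 B 1)` then any element of
`ran (sqrt M)` lying in the second summand is zero, provided
`B k ∈ ran S → B k = 0` and `ker B = 0`. -/
lemma key_range {K : Type*} [NormedAddCommGroup K] [InnerProductSpace ℂ K] [CompleteSpace K]
    (S B : K →L[ℂ] K) (hS : IsSelfAdjoint S) (hB : IsSelfAdjoint B)
    (M : WithLp 2 (K × K) →L[ℂ] WithLp 2 (K × K))
    (hM : M = adjoint (blk S 0 B 1) ∘L (blk S 0 B 1))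
    (hrange : ∀ k : K, B k ∈ Set.range ⇑S → B k = 0)
    (hkerB : ∀ k : K, B k = 0 → k = 0) :
    Set.range ⇑(CFC.sqrt M) ∩ Set.range ⇑(inr2 (E := K) (F := K)) = {0} := by
  set T : WithLp 2 (K × K) →L[ℂ] WithLp 2 (K × K) := blk S 0 B 1 with hT
  have hMnn : 0 ≤ M := by
    rw [hM, ← star_eq_adjoint, ← ContinuousLinearMap.mul_def]
    exact star_mul_self_nonneg T
  set Q := CFC.sqrt M with hQ
  have hQnn : 0 ≤ Q := CFC.sqrt_nonneg (a := M)
  have hQsa : IsSelfAdjoint Q := IsSelfAdjoint.of_nonneg hQnn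
  have hQQ : Q ∘L Q = M := by
    rw [← ContinuousLinearMap.mul_def]
    exact CFC.sqrt_mul_sqrt_self M hMnn
  -- norms
  have hQadj : adjoint Q = Q := by rw [← star_eq_adjoint, hQsa.star_eq]
  have hnorm : ∀ u, ‖Q u‖ = ‖T u‖ := by
    intro u
    have h1 : (⟪Q u, Q u⟫_ℂ) = ⟪T u, T u⟫_ℂ := by
      calc (⟪Q u, Q u⟫_ℂ) = ⟪adjoint Q u, Q u⟫_ℂ := by rw [hQadj]
        _ = ⟪u, Q (Q u)⟫_ℂ := by rw [adjoint_inner_left]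
        _ = ⟪u, M u⟫_ℂ := by rw [← ContinuousLinearMap.comp_apply, hQQ]
        _ = ⟪u, adjoint T (T u)⟫_ℂ := by rw [hM]; rfl
        _ = ⟪T u, T u⟫_ℂ := by rw [adjoint_inner_right]
    have h3 : ‖Q u‖ ^ 2 = ‖T u‖ ^ 2 := by
      rw [← inner_self_eq_norm_sq (𝕜 := ℂ), ← inner_self_eq_norm_sq (𝕜 := ℂ), h1]
    exact (sq_eq_sq₀ (norm_nonneg _) (norm_nonneg _)).mp h3
  have hTadj : adjoint T = blk S B 0 1 := by
    rw [hT, blk_adjoint]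
    rw [← star_eq_adjoint, hS.star_eq, ← star_eq_adjoint, hB.star_eq]
    rw [← star_eq_adjoint (A := (0 : K →L[ℂ] K)), ← star_eq_adjoint (A := (1 : K →L[ℂ] K))]
    rw [star_zero, star_one]
  apply Set.eq_singleton_iff_unique_mem.mpr
  refine ⟨Set.mem_inter ⟨0, map_zero _⟩ ⟨0, map_zero _⟩, ?_⟩
  rintro w ⟨⟨z, rfl⟩, ⟨k, hk⟩⟩
  have hdoug : ∃ v, adjoint T v = Q z := by
    apply douglas T (Q z) ‖z‖
    intro u
    calc ‖(⟪Q z, u⟫_ℂ)‖ = ‖(⟪z, Q u⟫_ℂ)‖ := by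
          rw [← hQadj, adjoint_inner_left, hQadj]
      _ ≤ ‖z‖ * ‖Q u‖ := norm_inner_le_norm _ _
      _ = ‖z‖ * ‖T u‖ := by rw [hnorm]
  obtain ⟨v, hv⟩ := hdoug
  rw [hTadj] at hv
  have heq : blk S B 0 1 v = inr2 k := hv.trans hk.symm
  have hfst : S v.fst + B v.snd = (0 : K) := by
    have := congrArg (fun x : WithLp 2 (K × K) => x.fst) heq
    simpa [blk_apply_fst, inr2_apply_fst] using this
  have hsnd : v.snd = k := by
    have := congrArg (fun x : WithLp 2 (K × K) => x.snd) heq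
    simpa [blk_apply_snd, inr2_apply_snd] using this
  have hBk : B k ∈ Set.range ⇑S := by
    refine ⟨-v.fst, ?_⟩
    rw [map_neg, ← hsnd]
    exact (neg_eq_of_add_eq_zero_right hfst).symm ▸ rfl
  have hk0 : k = 0 := hkerB k (hrange k hBk)
  rw [← hk, hk0, map_zero]

/-- Given selfadjoint contractions `Ẑ₀ ≤ Ẑ₁` on an infinite-dimensional separable Hilbert
space `K` with `ran (Ẑ₁ − Ẑ₀)^{1/2} ∩ ran (I + Ẑ₀)^{1/2} = {0}`,
`ran (Ẑ₁ − Ẑ₀)^{1/2} ∩ ran (I − Ẑ₁)^{1/2} = {0}` and `ker (Ẑ₁ − Ẑ₀) = {0}`, there is a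
selfadjoint contraction `X = [[X₁₁, X₁₂], [X₁₂*, X₂₂]]` on `K ⊕ K` with `(I ± X)_K = 0`
(on the second summand), `‖X₂₂‖ < 1`, `Ẑ₀ = X₁₁ − X₁₂ (I + X₂₂)⁻¹ X₁₂*` and
`Ẑ₁ = X₁₁ + X₁₂ (I − X₂₂)⁻¹ X₁₂*`. -/
theorem stmt_11 {K : Type*}
    [NormedAddCommGroup K] [InnerProductSpace ℂ K] [CompleteSpace K]
    [TopologicalSpace.SeparableSpace K] (hK : ¬FiniteDimensional ℂ K)
    (Z0 Z1 : K →L[ℂ] K) (hZ0sa : IsSelfAdjoint Z0) (hZ1sa : IsSelfAdjoint Z1)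
    (hZ0c : ‖Z0‖ ≤ 1) (hZ1c : ‖Z1‖ ≤ 1) (hle : Z0 ≤ Z1)
    (h0 : Set.range ⇑(CFC.sqrt (Z1 - Z0)) ∩ Set.range ⇑(CFC.sqrt (1 + Z0)) = {0})
    (h1 : Set.range ⇑(CFC.sqrt (Z1 - Z0)) ∩ Set.range ⇑(CFC.sqrt (1 - Z1)) = {0})
    (hker : LinearMap.ker ((Z1 - Z0 : K →L[ℂ] K) : K →ₗ[ℂ] K) = ⊥) :
    ∃ (X11 : K →L[ℂ] K) (X12 : K →L[ℂ] K) (X22 : K →L[ℂ] K),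
      IsSelfAdjoint (blk X11 X12 (adjoint X12) X22) ∧
      ‖blk X11 X12 (adjoint X12) X22‖ ≤ 1 ∧
      Set.range ⇑(CFC.sqrt (1 + blk X11 X12 (adjoint X12) X22)) ∩
          Set.range ⇑(inr2 (E := K) (F := K)) = {0} ∧
      Set.range ⇑(CFC.sqrt (1 - blk X11 X12 (adjoint X12) X22)) ∩
          Set.range ⇑(inr2 (E := K) (F := K)) = {0} ∧
      ‖X22‖ < 1 ∧
      Z0 = X11 - X12 ∘L Ring.inverse (1 + X22) ∘L adjoint X12 ∧
      Z1 = X11 + X12 ∘L Ring.inverse (1 - X22) ∘L adjoint X12 := by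
  have hnt : Nontrivial K := by
    by_contra h
    rw [not_nontrivial_iff_subsingleton] at h
    exact hK (Module.Finite.of_basis (Module.Basis.empty K (ι := Empty)))
  set D := Z1 - Z0 with hD
  have hDnn : 0 ≤ D := sub_nonneg.mpr hle
  have hDsa : IsSelfAdjoint D := hZ1sa.sub hZ0sa
  set R := CFC.sqrt D with hR
  have hRnn : 0 ≤ R := CFC.sqrt_nonneg (a := D)
  have hRR : R ∘L R = D := by
    rw [← ContinuousLinearMap.mul_def]; exact CFC.sqrt_mul_sqrt_self D hDnn
  set c : ℂ := Complex.ofReal ((Real.sqrt 2)⁻¹) with hc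
  have hsq2 : (0:ℝ) < Real.sqrt 2 := Real.sqrt_pos.mpr (by norm_num)
  have hc0 : c ≠ 0 := by
    rw [hc]
    simp only [ne_eq, Complex.ofReal_eq_zero, inv_eq_zero]
    exact ne_of_gt hsq2
  have hcc : c * c = (2⁻¹ : ℂ) := by
    rw [hc, ← Complex.ofReal_mul, ← mul_inv, Real.mul_self_sqrt (by norm_num)]
    norm_num
  have hcstar : star c = c := by
    rw [hc, Complex.star_def, Complex.conj_ofReal]
  set B := c • R with hB
  have hBsa : IsSelfAdjoint B := IsSelfAdjoint.smul hcstar (.of_nonneg hRnn)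
  have hBadj : adjoint B = B := by rw [← star_eq_adjoint, hBsa.star_eq]
  have hBB : B ∘L B = (2⁻¹ : ℂ) • D := by
    rw [hB, smul_comp, comp_smul, hRR, smul_smul, hcc]
  set A := (2⁻¹ : ℂ) • (Z0 + Z1) with hA
  have hstarhalf : star (2⁻¹ : ℂ) = 2⁻¹ := by simp
  have hAsa : IsSelfAdjoint A :=
    IsSelfAdjoint.smul hstarhalf (hZ0sa.add hZ1sa)
  have hAadj : adjoint A = A := by rw [← star_eq_adjoint, hAsa.star_eq]
  -- positivity of 1 + Z0 and 1 - Z1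
  have h1Z0 : 0 ≤ 1 + Z0 := by
    have hneg1 : (-1 : K →L[ℂ] K) ≤ Z0 := by
      have := (algebraMap_le_iff_le_spectrum (R := ℝ) (a := Z0) (r := -1) hZ0sa).mpr ?_
      · simpa [map_neg, map_one] using this
      · intro x hx
        have hb := spectrum.norm_le_norm_of_mem hx
        rw [Real.norm_eq_abs] at hb
        linarith [abs_le.mp (hb.trans hZ0c) |>.1]
    have := sub_nonneg.mpr hneg1
    simpa [sub_neg_eq_add, add_comm] using this
  have h1Z1 : 0 ≤ 1 - Z1 := by
    have hle1 : Z1 ≤ (1 : K →L[ℂ] K) := by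
      have := (le_algebraMap_iff_spectrum_le (R := ℝ) (a := Z1) (r := 1) hZ1sa).mpr ?_
      · simpa [map_one] using this
      · intro x hx
        have hb := spectrum.norm_le_norm_of_mem hx
        rw [Real.norm_eq_abs] at hb
        linarith [abs_le.mp (hb.trans hZ1c) |>.2]
    exact sub_nonneg.mpr hle1
  set S0 := CFC.sqrt (1 + Z0) with hS0
  set S1 := CFC.sqrt (1 - Z1) with hS1
  have hS0nn : 0 ≤ S0 := CFC.sqrt_nonneg (a := 1 + Z0)
  have hS1nn : 0 ≤ S1 := CFC.sqrt_nonneg (a := 1 - Z1)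
  have hS0sa : IsSelfAdjoint S0 := .of_nonneg hS0nn
  have hS1sa : IsSelfAdjoint S1 := .of_nonneg hS1nn
  have hS0sq : S0 ∘L S0 = 1 + Z0 := by
    rw [← ContinuousLinearMap.mul_def]; exact CFC.sqrt_mul_sqrt_self _ h1Z0
  have hS1sq : S1 ∘L S1 = 1 - Z1 := by
    rw [← ContinuousLinearMap.mul_def]; exact CFC.sqrt_mul_sqrt_self _ h1Z1
  refine ⟨A, B, 0, ?_⟩
  rw [hBadj]
  set X := blk A B B (0 : K →L[ℂ] K) with hX
  have hXadj : adjoint X = X := by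
    rw [hX, blk_adjoint, hAadj, hBadj, ← star_eq_adjoint (A := (0 : K →L[ℂ] K)), star_zero]
  have hXsa : IsSelfAdjoint X := isSelfAdjoint_iff'.mpr hXadj
  have hplus : 1 + X = adjoint (blk S0 0 B 1) ∘L blk S0 0 B 1 := by
    rw [blk_adjoint, ← star_eq_adjoint (A := S0), hS0sa.star_eq, hBadj,
      ← star_eq_adjoint (A := (0 : K →L[ℂ] K)), star_zero,
      ← star_eq_adjoint (A := (1 : K →L[ℂ] K)), star_one, blk_comp]
    rw [hX, one_blk, blk_add]
    simp only [zero_comp, comp_zero, add_zero, zero_add, ContinuousLinearMap.one_def,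
      ContinuousLinearMap.id_comp, ContinuousLinearMap.comp_id]
    rw [hS0sq, hBB]
    rw [show (ContinuousLinearMap.id ℂ K) + A = (1 + Z0) + (2⁻¹ : ℂ) • D by
      rw [← ContinuousLinearMap.one_def]; module]
  have hminus : 1 - X = adjoint (blk S1 0 (-B) 1) ∘L blk S1 0 (-B) 1 := by
    rw [blk_adjoint, ← star_eq_adjoint (A := S1), hS1sa.star_eq,
      ← star_eq_adjoint (A := -B), star_neg, hBsa.star_eq,
      ← star_eq_adjoint (A := (0 : K →L[ℂ] K)), star_zero,
      ← star_eq_adjoint (A := (1 : K →L[ℂ] K)), star_one, blk_comp]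
    rw [hX, sub_eq_add_neg, one_blk, blk_neg, blk_add]
    simp only [zero_comp, comp_zero, add_zero, zero_add, neg_zero,
      ContinuousLinearMap.one_def, ContinuousLinearMap.id_comp, ContinuousLinearMap.comp_id]
    rw [comp_neg, neg_comp, neg_neg, hS1sq, hBB]
    rw [show (ContinuousLinearMap.id ℂ K) + -A = (1 - Z1) + (2⁻¹ : ℂ) • D by
      rw [← ContinuousLinearMap.one_def]; module]
  have hPnn : 0 ≤ 1 + X := by
    rw [hplus, ← star_eq_adjoint, ← ContinuousLinearMap.mul_def]
    exact star_mul_self_nonneg _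
  have hMnn : 0 ≤ 1 - X := by
    rw [hminus, ← star_eq_adjoint, ← ContinuousLinearMap.mul_def]
    exact star_mul_self_nonneg _
  have hntW : Nontrivial (WithLp 2 (K × K)) := by
    obtain ⟨x, hx⟩ := exists_ne (0 : K)
    exact ⟨(WithLp.equiv 2 (K × K)).symm (x, 0), 0, fun h => hx (congrArg (fun w : WithLp 2 (K × K) => w.fst) h)⟩
  have hnormX : ‖X‖ ≤ 1 := by
    have hX1 : X ≤ 1 := sub_nonneg.mp hMnn
    have hX2 : (-1 : WithLp 2 (K × K) →L[ℂ] WithLp 2 (K × K)) ≤ X := by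
      refine sub_nonneg.mp ?_
      simpa [sub_neg_eq_add, add_comm] using hPnn
    rcases CStarAlgebra.norm_or_neg_norm_mem_spectrum hXsa with h | h
    · have := (le_algebraMap_iff_spectrum_le (R := ℝ) (a := X) (r := 1) hXsa).mp
        (by simpa [map_one] using hX1) ‖X‖ h
      exact this
    · have := (algebraMap_le_iff_le_spectrum (R := ℝ) (a := X) (r := -1) hXsa).mp
        (by simpa [map_neg, map_one] using hX2) (-‖X‖) h
      linarith
  have hrange0 : ∀ k : K, B k ∈ Set.range ⇑S0 → B k = 0 := by
    intro k hk
    have h1' : B k ∈ Set.range ⇑R := ⟨c • k, by rw [map_smul]; rfl⟩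
    have := h0 ▸ Set.mem_inter h1' hk
    exact this
  have hker' : ∀ k : K, B k = 0 → k = 0 := by
    intro k hk
    have hRk : R k = 0 := by
      have : c • R k = 0 := hk
      exact (smul_eq_zero.mp this).resolve_left hc0
    have hDk : D k = 0 := by
      have : (R ∘L R) k = R (R k) := rfl
      rw [← hRR, this, hRk, map_zero]
    have : k ∈ LinearMap.ker (D : K →ₗ[ℂ] K) := LinearMap.mem_ker.mpr hDk
    rw [hker] at this
    exact this
  have hrange1 : ∀ k : K, (-B) k ∈ Set.range ⇑S1 → (-B) k = 0 := by
    intro k hk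
    have h1' : (-B) k ∈ Set.range ⇑R := ⟨-(c • k), by rw [map_neg, map_smul]; rfl⟩
    have := h1 ▸ Set.mem_inter h1' hk
    exact this
  have hker1 : ∀ k : K, (-B) k = 0 → k = 0 := by
    intro k hk
    exact hker' k (neg_eq_zero.mp hk)
  refine ⟨hXsa, hnormX, ?_, ?_, ?_, ?_, ?_⟩
  · exact key_range S0 B hS0sa hBsa (1 + X) hplus hrange0 hker'
  · exact key_range S1 (-B) hS1sa hBsa.neg (1 - X) hminus hrange1 hker1
  · rw [norm_zero]; exact zero_lt_one
  · rw [add_zero, Ring.inverse_one, ContinuousLinearMap.one_def,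
      ContinuousLinearMap.id_comp, hBB]
    module
  · rw [sub_zero, Ring.inverse_one, ContinuousLinearMap.one_def,
      ContinuousLinearMap.id_comp, hBB]
    module
end
end

section
/- Assume the exit-space setup, let X = [[X₁₁, X₁₂], [X₁₂*, X₂₂]] be a selfadjoint contraction on 𝔇_{K0*} ⊕ 𝓗, and assume (as is automatic) that B̃_X is a contraction on H ⊕ 𝓗. Let C̃ be the compression of B̃_X to H (the upper-left 2×2 block [[B₀, D_{B₀}K₀*], [K₀D_{B₀}, −K₀B₀K₀* + D_{K0*}X₁₁D_{K0*}]]), and let M̃ : 𝓗 → H be the block column (0, D_{K0*}X₁₂). For z ∈ ℂ \ ((−∞, −1] ∪ [1, +∞)) define Θ(z) = X₂₂ + z·M̃* (I_H − z·C̃)^{-1} M̃ on 𝓗. Then for every such z the operator z·Θ(z) − I_𝓗 is boundedly invertible and P_𝓗 (z·B̃_X − I)^{-1}↾𝓗 = (z·Θ(z) − I_𝓗)^{-1}. -/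
open ContinuousLinearMap Complex Filter
open scoped InnerProductSpace Topology

set_option synthInstance.maxHeartbeats 1000000
set_option maxHeartbeats 1000000

noncomputable section

variable {E F : Type*} [NormedAddCommGroup E] [InnerProductSpace ℂ E]
  [NormedAddCommGroup F] [InnerProductSpace ℂ F]

variable (A : E →L[ℂ] E) (B : F →L[ℂ] E) (C : E →L[ℂ] F) (D : F →L[ℂ] F)

lemma fst2_inl2 : (fst2 : WithLp 2 (E × F) →L[ℂ] E) ∘L inl2 = 1 := by ext x; simp [fst2, inl2]
lemma snd2_inr2 : (snd2 : WithLp 2 (E × F) →L[ℂ] F) ∘L inr2 = 1 := by ext x; simp [snd2, inr2]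
lemma fst2_inr2 : (fst2 : WithLp 2 (E × F) →L[ℂ] E) ∘L inr2 = 0 := by ext x; simp [fst2, inr2]
lemma snd2_inl2 : (snd2 : WithLp 2 (E × F) →L[ℂ] F) ∘L inl2 = 0 := by ext x; simp [snd2, inl2]

lemma fst2_blk : fst2 ∘L blk A B C D = A ∘L fst2 + B ∘L snd2 := by
  ext x; simp [fst2, snd2, blk]
lemma snd2_blk : snd2 ∘L blk A B C D = C ∘L fst2 + D ∘L snd2 := by
  ext x; simp [fst2, snd2, blk]
lemma blk_inl2 : blk A B C D ∘L inl2 = inl2 ∘L A + inr2 ∘L C := by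
  ext x
  simp only [blk, inl2, inr2, coe_comp', Function.comp_apply, ContinuousLinearMap.add_apply]
  simp [← WithLp.toLp_add]
lemma blk_inr2 : blk A B C D ∘L inr2 = inl2 ∘L B + inr2 ∘L D := by
  ext x
  simp only [blk, inl2, inr2, coe_comp', Function.comp_apply, ContinuousLinearMap.add_apply]
  simp [← WithLp.toLp_add]

lemma ext_lr (T S : WithLp 2 (E × F) →L[ℂ] WithLp 2 (E × F))
    (h1 : T ∘L inl2 = S ∘L inl2) (h2 : T ∘L inr2 = S ∘L inr2) : T = S := by
  ext x
  have hx : x = inl2 x.fst + inr2 x.snd := by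
    apply (WithLp.prodContinuousLinearEquiv 2 ℂ E F).injective
    rw [map_add]
    ext <;> simp [inl2, inr2]
  rw [hx, map_add, map_add]
  exact congrArg₂ (· + ·) (congrFun (congrArg DFunLike.coe h1) x.fst)
    (congrFun (congrArg DFunLike.coe h2) x.snd)

lemma ext_ud (T S : WithLp 2 (E × F) →L[ℂ] WithLp 2 (E × F))
    (h1 : fst2 ∘L T = fst2 ∘L S) (h2 : snd2 ∘L T = snd2 ∘L S) : T = S := by
  ext x
  apply (WithLp.prodContinuousLinearEquiv 2 ℂ E F).injective
  have e1 := congrFun (congrArg DFunLike.coe h1) x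
  have e2 := congrFun (congrArg DFunLike.coe h2) x
  simp only [coe_comp', Function.comp_apply, fst2, snd2] at e1 e2
  exact Prod.ext e1 e2
variable [CompleteSpace E] [CompleteSpace F]
variable (A : E →L[ℂ] E) (B : F →L[ℂ] E) (C : E →L[ℂ] F) (D : F →L[ℂ] F)

lemma adjoint_inl2 : adjoint (inl2 : E →L[ℂ] WithLp 2 (E × F)) = fst2 := by
  symm; rw [eq_adjoint_iff]
  intro x y
  simp [fst2, inl2, WithLp.prod_inner_apply]

lemma adjoint_inr2 : adjoint (inr2 : F →L[ℂ] WithLp 2 (E × F)) = snd2 := by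
  symm; rw [eq_adjoint_iff]
  intro x y
  simp [snd2, inr2, WithLp.prod_inner_apply]

lemma adjoint_fst2 : adjoint (fst2 : WithLp 2 (E × F) →L[ℂ] E) = inl2 := by
  rw [← adjoint_inl2, adjoint_adjoint]

lemma adjoint_snd2 : adjoint (snd2 : WithLp 2 (E × F) →L[ℂ] F) = inr2 := by
  rw [← adjoint_inr2, adjoint_adjoint]

lemma adjoint_blk :
    adjoint (blk A B C D) = blk (adjoint A) (adjoint C) (adjoint B) (adjoint D) := by
  symm; rw [eq_adjoint_iff]
  intro x y
  simp only [blk, coe_comp', Function.comp_apply, WithLp.prod_inner_apply]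
  simp [inner_add_left, inner_add_right, adjoint_inner_left]
  ring

lemma norm_inl2_apply (x : E) : ‖(inl2 x : WithLp 2 (E × F))‖ = ‖x‖ := by
  simpa [inl2] using WithLp.norm_equiv_symm_fst 2 E F x

lemma norm_inr2_apply (x : F) : ‖(inr2 x : WithLp 2 (E × F))‖ = ‖x‖ := by
  simpa [inr2] using WithLp.norm_equiv_symm_snd 2 E F x

lemma norm_fst2_apply (x : WithLp 2 (E × F)) : ‖fst2 x‖ ≤ ‖x‖ := by
  have h := WithLp.prod_norm_sq_eq_of_L2 x
  have : ‖fst2 x‖ = ‖x.fst‖ := by simp [fst2]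
  rw [this]
  nlinarith [norm_nonneg x, norm_nonneg x.fst, norm_nonneg x.snd]

lemma norm_snd2_apply (x : WithLp 2 (E × F)) : ‖snd2 x‖ ≤ ‖x‖ := by
  have h := WithLp.prod_norm_sq_eq_of_L2 x
  have : ‖snd2 x‖ = ‖x.snd‖ := by simp [snd2]
  rw [this]
  nlinarith [norm_nonneg x, norm_nonneg x.fst, norm_nonneg x.snd]
lemma isUnit_smul_sub_one {G : Type*} [NormedAddCommGroup G] [InnerProductSpace ℂ G]
    [CompleteSpace G] (A : G →L[ℂ] G) (hA : IsSelfAdjoint A) (hn : ‖A‖ ≤ 1) (z : ℂ)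
    (hz : ¬(z.im = 0 ∧ 1 ≤ |z.re|)) : IsUnit (z • A - 1) := by
  rcases subsingleton_or_nontrivial G with hG | hG
  · have : Subsingleton (G →L[ℂ] G) := ⟨fun a b => by ext x; exact Subsingleton.elim _ _⟩
    exact isUnit_of_subsingleton _
  rcases eq_or_ne z 0 with rfl | hz0
  · simpa using IsUnit.neg isUnit_one
  have hmem : z⁻¹ ∉ spectrum ℂ A := by
    intro h
    have hre := hA.mem_spectrum_eq_re h
    have him : z.im = 0 := by
      have := congrArg Complex.im hre
      simp [Complex.inv_im] at this
      rcases this with h1 | h1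
      · exact h1
      · exact absurd h1 hz0
    have hlt : |z.re| < 1 := by
      rcases lt_or_ge |z.re| 1 with h1 | h1
      · exact h1
      · exact absurd ⟨him, h1⟩ hz
    have hnorm : ‖(z⁻¹ : ℂ)‖ ≤ ‖A‖ := spectrum.norm_le_norm_of_mem h
    have hzre : z = (z.re : ℂ) := Complex.ext rfl him
    have : ‖z‖ = |z.re| := by rw [hzre]; simp
    rw [norm_inv, this] at hnorm
    have hpos : 0 < |z.re| := by
      rcases eq_or_lt_of_le (abs_nonneg z.re) with h2 | h2
      · exact absurd (Complex.ext (abs_eq_zero.mp h2.symm) him) hz0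
      · exact h2
    have : (1 : ℝ) < |z.re|⁻¹ := (one_lt_inv₀ hpos).mpr hlt
    linarith
  have hu : IsUnit (algebraMap ℂ (G →L[ℂ] G) z⁻¹ - A) := spectrum.notMem_iff.mp hmem
  have key : z • A - 1 = (-z) • (algebraMap ℂ (G →L[ℂ] G) z⁻¹ - A) := by
    have h1 : -z * z⁻¹ = -1 := by field_simp
    rw [Algebra.algebraMap_eq_smul_one, smul_sub, smul_smul, h1]
    module
  rw [key, Algebra.smul_def]
  exact ((Ne.isUnit (neg_ne_zero.mpr hz0)).map (algebraMap ℂ (G →L[ℂ] G))).mul hu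
section pt
variable (A : E →L[ℂ] E) (B : F →L[ℂ] E) (C : E →L[ℂ] F) (D : F →L[ℂ] F)

lemma blk_corner11 : fst2 ∘L blk A B C D ∘L inl2 = A := by ext x; simp [fst2, inl2, blk]
lemma blk_corner22 : snd2 ∘L blk A B C D ∘L inr2 = D := by ext x; simp [snd2, inr2, blk]
lemma fst2_blk_apply (x : WithLp 2 (E × F)) :
    fst2 (blk A B C D x) = A (fst2 x) + B (snd2 x) := by simp [fst2, snd2, blk]
lemma snd2_blk_apply (x : WithLp 2 (E × F)) :
    snd2 (blk A B C D x) = C (fst2 x) + D (snd2 x) := by simp [fst2, snd2, blk]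
lemma fst2_inl2_apply (a : E) : fst2 (inl2 a : WithLp 2 (E × F)) = a := by simp [fst2, inl2]
lemma fst2_inr2_apply (b : F) : fst2 (inr2 b : WithLp 2 (E × F)) = 0 := by simp [fst2, inr2]
lemma snd2_inl2_apply (a : E) : snd2 (inl2 a : WithLp 2 (E × F)) = 0 := by simp [snd2, inl2]
lemma snd2_inr2_apply (b : F) : snd2 (inr2 b : WithLp 2 (E × F)) = b := by simp [snd2, inr2]

lemma eq_of_components (x y : WithLp 2 (E × F)) (h1 : fst2 x = fst2 y) (h2 : snd2 x = snd2 y) :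
    x = y := by
  apply (WithLp.prodContinuousLinearEquiv 2 ℂ E F).injective
  exact Prod.ext h1 h2

lemma norm_fst2_le : ‖(fst2 : WithLp 2 (E × F) →L[ℂ] E)‖ ≤ 1 :=
  opNorm_le_bound _ zero_le_one (by simpa using norm_fst2_apply)
lemma norm_inl2_le : ‖(inl2 : E →L[ℂ] WithLp 2 (E × F))‖ ≤ 1 :=
  opNorm_le_bound _ zero_le_one (fun x => by rw [norm_inl2_apply, one_mul])
end pt
/-- Compressed resolvent to the exit space: for a selfadjoint contractive exit-space
extension `B̃_X` with upper-left compression `C̃` and column `M̃ = (0, D_{K₀*}X₁₂)`, the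
transfer function `Θ(z) = X₂₂ + z·M̃* (I − z·C̃)⁻¹ M̃` satisfies
`P_𝓗 (z·B̃_X − I)⁻¹ ↾ 𝓗 = (z·Θ(z) − I)⁻¹` for all `z ∈ ℂ \ ((−∞,−1] ∪ [1,∞))`. -/
theorem stmt_14 {H₀ N 𝓗 : Type*}
    [NormedAddCommGroup H₀] [InnerProductSpace ℂ H₀] [CompleteSpace H₀]
    [TopologicalSpace.SeparableSpace H₀]
    [NormedAddCommGroup N] [InnerProductSpace ℂ N] [CompleteSpace N]
    [TopologicalSpace.SeparableSpace N]
    [NormedAddCommGroup 𝓗] [InnerProductSpace ℂ 𝓗] [CompleteSpace 𝓗]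
    [TopologicalSpace.SeparableSpace 𝓗]
    (B₀ : H₀ →L[ℂ] H₀) (hB₀sa : IsSelfAdjoint B₀) (hB₀c : ‖B₀‖ ≤ 1)
    (K₀ : H₀ →L[ℂ] N) (hK₀c : ‖K₀‖ ≤ 1)
    (hker : LinearMap.ker ((CFC.sqrt (1 - B₀ ^ 2) : H₀ →L[ℂ] H₀) : H₀ →ₗ[ℂ] H₀) ≤ LinearMap.ker (K₀ : H₀ →ₗ[ℂ] N)) :
    let DB := CFC.sqrt (1 - B₀ ^ 2)
    let DK := CFC.sqrt (1 - K₀ ∘L adjoint K₀)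
    let 𝔇 := (LinearMap.range (DK : N →ₗ[ℂ] N)).topologicalClosure
    ∀ (X11 : ↥𝔇 →L[ℂ] ↥𝔇) (X12 : 𝓗 →L[ℂ] ↥𝔇) (X22 : 𝓗 →L[ℂ] 𝓗),
      IsSelfAdjoint (blk X11 X12 (adjoint X12) X22) →
      ‖blk X11 X12 (adjoint X12) X22‖ ≤ 1 →
      let Ct : WithLp 2 (H₀ × N) →L[ℂ] WithLp 2 (H₀ × N) :=
        blk B₀ (DB ∘L adjoint K₀) (K₀ ∘L DB)
          (-(K₀ ∘L B₀ ∘L adjoint K₀) +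
            DK ∘L 𝔇.subtypeL ∘L X11 ∘L 𝔇.orthogonalProjectionOnto ∘L DK)
      let Mt : 𝓗 →L[ℂ] WithLp 2 (H₀ × N) := inr2 ∘L DK ∘L 𝔇.subtypeL ∘L X12
      let BX := blk Ct Mt (adjoint X12 ∘L 𝔇.orthogonalProjectionOnto ∘L DK ∘L snd2) X22
      ‖BX‖ ≤ 1 →
      ∀ z : ℂ, ¬(z.im = 0 ∧ 1 ≤ |z.re|) →
        let Θ : 𝓗 →L[ℂ] 𝓗 :=
          X22 + z • (adjoint Mt ∘L Ring.inverse (1 - z • Ct) ∘L Mt)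
        (snd2 ∘L Ring.inverse (z • BX - 1) ∘L inr2) ∘L (z • Θ - 1) = 1 ∧
          (z • Θ - 1) ∘L (snd2 ∘L Ring.inverse (z • BX - 1) ∘L inr2) = 1 := by
  intro DB DK 𝔇 X11 X12 X22 hXsa hXn Ct Mt BX hBXn z hz Θ
  have hDBsa : IsSelfAdjoint DB := IsSelfAdjoint.of_nonneg (CFC.sqrt_nonneg _)
  have hDKsa : IsSelfAdjoint DK := IsSelfAdjoint.of_nonneg (CFC.sqrt_nonneg _)
  have hXadj : blk (adjoint X11) X12 (adjoint X12) (adjoint X22)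
      = blk X11 X12 (adjoint X12) X22 := by
    have h := hXsa.adjoint_eq
    rwa [adjoint_blk, adjoint_adjoint] at h
  have hX11 : adjoint X11 = X11 := by
    have h := congrArg (fun T => fst2 ∘L T ∘L inl2) hXadj
    simpa only [blk_corner11] using h
  have hX22 : adjoint X22 = X22 := by
    have h := congrArg (fun T => snd2 ∘L T ∘L inr2) hXadj
    simpa only [blk_corner22] using h
  have hMt : adjoint Mt = adjoint X12 ∘L 𝔇.orthogonalProjectionOnto ∘L DK ∘L snd2 := by
    unfold Mt
    rw [adjoint_comp, adjoint_comp, adjoint_comp, adjoint_inr2, Submodule.adjoint_subtypeL,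
      hDKsa.adjoint_eq]
    ext x; rfl
  have e1 : adjoint (DB ∘L adjoint K₀) = K₀ ∘L DB := by
    rw [adjoint_comp, adjoint_adjoint, hDBsa.adjoint_eq]
  have e2 : adjoint (K₀ ∘L DB) = DB ∘L adjoint K₀ := by
    rw [adjoint_comp, hDBsa.adjoint_eq]
  have p1 : adjoint (K₀ ∘L B₀ ∘L adjoint K₀) = K₀ ∘L B₀ ∘L adjoint K₀ := by
    rw [adjoint_comp, adjoint_comp, adjoint_adjoint, hB₀sa.adjoint_eq]
    ext x; rfl
  have p2 : adjoint (DK ∘L 𝔇.subtypeL ∘L X11 ∘L 𝔇.orthogonalProjectionOnto ∘L DK)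
      = DK ∘L 𝔇.subtypeL ∘L X11 ∘L 𝔇.orthogonalProjectionOnto ∘L DK := by
    rw [adjoint_comp, adjoint_comp, adjoint_comp, adjoint_comp, hDKsa.adjoint_eq, hX11,
      Submodule.adjoint_subtypeL, Submodule.adjoint_orthogonalProjectionOnto]
    ext x; rfl
  have e3 : adjoint (-(K₀ ∘L B₀ ∘L adjoint K₀) +
      DK ∘L 𝔇.subtypeL ∘L X11 ∘L 𝔇.orthogonalProjectionOnto ∘L DK)
      = -(K₀ ∘L B₀ ∘L adjoint K₀) +
        DK ∘L 𝔇.subtypeL ∘L X11 ∘L 𝔇.orthogonalProjectionOnto ∘L DK := by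
    rw [map_add, map_neg, p1, p2]
  have hCtadj : adjoint Ct = Ct := by
    unfold Ct
    rw [adjoint_blk, hB₀sa.adjoint_eq, e1, e2, e3]
  have hCtsa : IsSelfAdjoint Ct := isSelfAdjoint_iff'.mpr hCtadj
  have hBXeq : BX = blk Ct Mt (adjoint Mt) X22 := by rw [hMt]
  have hBXsa : IsSelfAdjoint BX := by
    refine isSelfAdjoint_iff'.mpr ?_
    rw [hBXeq, adjoint_blk, adjoint_adjoint, hCtadj, hX22]
  have hCteq : Ct = fst2 ∘L BX ∘L inl2 := by
    rw [hBXeq, blk_corner11]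
  have hCtn : ‖Ct‖ ≤ 1 := by
    refine opNorm_le_bound _ zero_le_one fun x => ?_
    have hx : Ct x = fst2 (BX (inl2 x)) := by rw [hCteq]; rfl
    rw [hx, one_mul]
    calc ‖fst2 (BX (inl2 x))‖ ≤ ‖BX (inl2 x)‖ := norm_fst2_apply _
      _ ≤ ‖BX‖ * ‖inl2 x‖ := le_opNorm _ _
      _ = ‖BX‖ * ‖x‖ := by rw [norm_inl2_apply]
      _ ≤ 1 * ‖x‖ := mul_le_mul_of_nonneg_right hBXn (norm_nonneg x)
      _ = ‖x‖ := one_mul _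
  have hTu : IsUnit (z • BX - 1) := isUnit_smul_sub_one BX hBXsa hBXn z hz
  have hNu : IsUnit (1 - z • Ct) := by
    have h := (isUnit_smul_sub_one Ct hCtsa hCtn z hz).neg
    rwa [neg_sub] at h
  have hTR : ∀ y, (z • BX - 1) (Ring.inverse (z • BX - 1) y) = y := fun y => by
    rw [← ContinuousLinearMap.mul_apply, Ring.mul_inverse_cancel _ hTu, one_apply_eq_self]
  have hRT : ∀ y, Ring.inverse (z • BX - 1) ((z • BX - 1) y) = y := fun y => by
    rw [← ContinuousLinearMap.mul_apply, Ring.inverse_mul_cancel _ hTu, one_apply_eq_self]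
  have hNNi : ∀ y, (1 - z • Ct) (Ring.inverse (1 - z • Ct) y) = y := fun y => by
    rw [← ContinuousLinearMap.mul_apply, Ring.mul_inverse_cancel _ hNu, one_apply_eq_self]
  have hNiN : ∀ y, Ring.inverse (1 - z • Ct) ((1 - z • Ct) y) = y := fun y => by
    rw [← ContinuousLinearMap.mul_apply, Ring.inverse_mul_cancel _ hNu, one_apply_eq_self]
  have hBXf : ∀ x, fst2 (BX x) = Ct (fst2 x) + Mt (snd2 x) := fun x => by
    rw [hBXeq]; exact fst2_blk_apply _ _ _ _ x
  have hBXs : ∀ x, snd2 (BX x) = adjoint Mt (fst2 x) + X22 (snd2 x) := fun x => by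
    rw [hBXeq]; exact snd2_blk_apply _ _ _ _ x
  have hΘ : ∀ b, Θ b = X22 b + z • adjoint Mt (Ring.inverse (1 - z • Ct) (Mt b)) := by
    intro b
    unfold Θ
    simp only [ContinuousLinearMap.add_apply, ContinuousLinearMap.smul_apply, coe_comp',
      Function.comp_apply]
  clear_value Θ BX Mt Ct
  have key : ∀ h : 𝓗,
      (z • BX - 1) (inl2 (z • Ring.inverse (1 - z • Ct) (Mt h)) + inr2 h)
        = inr2 ((z • Θ - 1) h) := by
    intro h
    set a : WithLp 2 (H₀ × N) := z • Ring.inverse (1 - z • Ct) (Mt h) with ha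
    have haN : (1 - z • Ct) a = z • Mt h := by
      rw [ha, map_smul, hNNi]
    have haN' : a - z • Ct a = z • Mt h := by
      have hx : (1 - z • Ct) a = a - z • Ct a := by
        simp [ContinuousLinearMap.sub_apply, ContinuousLinearMap.smul_apply]
      rwa [hx] at haN
    refine eq_of_components _ _ ?_ ?_
    · simp only [ContinuousLinearMap.sub_apply, ContinuousLinearMap.smul_apply,
        one_apply_eq_self, map_sub, map_smul, map_add, hBXf, fst2_inl2_apply, fst2_inr2_apply,
        snd2_inl2_apply, snd2_inr2_apply, add_zero, zero_add, smul_add, smul_zero, sub_zero,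
        map_zero]
      rw [← haN']
      abel
    · simp only [ContinuousLinearMap.sub_apply, ContinuousLinearMap.smul_apply,
        one_apply_eq_self, map_sub, map_smul, map_add, hBXs, fst2_inl2_apply, fst2_inr2_apply,
        snd2_inl2_apply, snd2_inr2_apply, add_zero, zero_add, smul_add, smul_zero, sub_zero,
        map_zero, hΘ]
      rw [ha, map_smul]
      abel
  constructor
  · ext h
    simp only [coe_comp', Function.comp_apply, one_apply_eq_self]
    rw [← key, hRT]
    simp [snd2_inl2_apply, snd2_inr2_apply, map_add]
  · ext h
    simp only [coe_comp', Function.comp_apply, one_apply_eq_self]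
    set w := Ring.inverse (z • BX - 1) (inr2 h) with hw0
    have hw : (z • BX - 1) w = inr2 h := hTR (inr2 h)
    have hf : fst2 ((z • BX - 1) w) = z • Ct (fst2 w) + z • Mt (snd2 w) - fst2 w := by
      simp only [ContinuousLinearMap.sub_apply, ContinuousLinearMap.smul_apply, one_apply_eq_self,
        map_sub, map_smul, hBXf, smul_add]
    have hs : snd2 ((z • BX - 1) w) = z • adjoint Mt (fst2 w) + z • X22 (snd2 w) - snd2 w := by
      simp only [ContinuousLinearMap.sub_apply, ContinuousLinearMap.smul_apply, one_apply_eq_self,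
        map_sub, map_smul, hBXs, smul_add]
    rw [hw, fst2_inr2_apply] at hf
    rw [hw, snd2_inr2_apply] at hs
    have hfw : (1 - z • Ct) (fst2 w) = z • Mt (snd2 w) := by
      have hx : (1 - z • Ct) (fst2 w) = fst2 w - z • Ct (fst2 w) := by
        simp [ContinuousLinearMap.sub_apply, ContinuousLinearMap.smul_apply]
      rw [hx]
      have e : z • Ct (fst2 w) + z • Mt (snd2 w) = fst2 w := sub_eq_zero.mp hf.symm
      calc fst2 w - z • Ct (fst2 w)
          = (z • Ct (fst2 w) + z • Mt (snd2 w)) - z • Ct (fst2 w) := by rw [e]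
        _ = z • Mt (snd2 w) := by abel
    have hfw2 : fst2 w = z • Ring.inverse (1 - z • Ct) (Mt (snd2 w)) := by
      have hc := congrArg (fun y => (Ring.inverse (1 - z • Ct) :
        WithLp 2 (H₀ × N) →L[ℂ] WithLp 2 (H₀ × N)) y) hfw
      rw [hNiN, map_smul] at hc
      exact hc
    rw [ContinuousLinearMap.sub_apply, ContinuousLinearMap.smul_apply, one_apply_eq_self, hΘ]
    rw [hs, hfw2, map_smul]
    simp only [smul_add, smul_smul]
    abel
end
end

section
/- Let N and H be complex Hilbert spaces and let U = [[D, C], [C*, A]] be a selfadjoint contraction on N ⊕ H, where D : N → N, C : H → N, A : H → H. Then for every x ∈ (−1, 1) the operator Θ(x) = D + x·C (I − xA)^{-1} C* is a selfadjoint contraction on N (in particular ‖Θ(x)‖ ≤ 1). -/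
open ContinuousLinearMap Complex Filter
open scoped InnerProductSpace Topology

set_option synthInstance.maxHeartbeats 1000000
set_option maxHeartbeats 1000000

noncomputable section

variable {E F : Type*} [NormedAddCommGroup E] [InnerProductSpace ℂ E]
  [NormedAddCommGroup F] [InnerProductSpace ℂ F]

lemma blk_mk2 (A : E →L[ℂ] E) (B : F →L[ℂ] E) (C : E →L[ℂ] F) (D : F →L[ℂ] F) (e : E) (f : F) :
    blk A B C D (mk2 e f) = mk2 (A e + B f) (C e + D f) := rfl

lemma norm_mk2_sq (e : E) (f : F) : ‖(mk2 e f : WithLp 2 (E × F))‖ ^ 2 = ‖e‖ ^ 2 + ‖f‖ ^ 2 :=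
  WithLp.prod_norm_sq_eq_of_L2 (mk2 e f)

lemma inner_mk2 (a c : E) (b d : F) :
    (inner ℂ (mk2 a b) (mk2 c d) : ℂ) = inner ℂ a c + inner ℂ b d := rfl

lemma sq_le_norm_aux {a b : ℝ} (ha : 0 ≤ a) (hb : 0 ≤ b) (h : a ^ 2 ≤ b ^ 2) : a ≤ b := by
  nlinarith [sq_nonneg (a - b), sq_nonneg (a + b)]

lemma sq_eq_norm_aux {a b : ℝ} (ha : 0 ≤ a) (hb : 0 ≤ b) (h : a ^ 2 = b ^ 2) : a = b :=
  le_antisymm (sq_le_norm_aux ha hb h.le) (sq_le_norm_aux hb ha h.ge)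

/-- If `U = [[D, C], [C*, A]]` is a selfadjoint contraction on `N ⊕ H`, then for every
`x ∈ (−1, 1)` the value `Θ(x) = D + x·C (I − xA)⁻¹ C*` of the transfer function is a
selfadjoint contraction on `N`. -/
theorem stmt_18 {N H : Type*} [NormedAddCommGroup N] [InnerProductSpace ℂ N] [CompleteSpace N]
    [NormedAddCommGroup H] [InnerProductSpace ℂ H] [CompleteSpace H]
    (D : N →L[ℂ] N) (C : H →L[ℂ] N) (A : H →L[ℂ] H)
    (hUsa : IsSelfAdjoint (blk D C (adjoint C) A))
    (hUc : ‖blk D C (adjoint C) A‖ ≤ 1)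
    (x : ℝ) (hx : x ∈ Set.Ioo (-1 : ℝ) 1) :
    IsSelfAdjoint (D + (x : ℂ) • (C ∘L Ring.inverse (1 - (x : ℂ) • A) ∘L adjoint C)) ∧
      ‖D + (x : ℂ) • (C ∘L Ring.inverse (1 - (x : ℂ) • A) ∘L adjoint C)‖ ≤ 1 := by
  obtain ⟨hx1, hx2⟩ := hx
  have hxabs : |x| < 1 := abs_lt.2 ⟨hx1, hx2⟩
  set U := blk D C (adjoint C) A with hU
  have hUsym := ContinuousLinearMap.isSelfAdjoint_iff_isSymmetric.mp hUsa
  have eU : ∀ (e : N) (f : H), U (mk2 e f) = mk2 (D e + C f) (adjoint C e + A f) :=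
    fun e f => blk_mk2 D C (adjoint C) A e f
  -- A and D are selfadjoint
  have hA : IsSelfAdjoint A := by
    rw [ContinuousLinearMap.isSelfAdjoint_iff_isSymmetric]
    intro h₁ h₂
    have h0 := hUsym (mk2 0 h₁) (mk2 0 h₂)
    simp only [ContinuousLinearMap.coe_coe] at h0
    rw [eU, eU, inner_mk2, inner_mk2] at h0
    simpa using h0
  have hD : IsSelfAdjoint D := by
    rw [ContinuousLinearMap.isSelfAdjoint_iff_isSymmetric]
    intro n₁ n₂
    have h0 := hUsym (mk2 n₁ 0) (mk2 n₂ 0)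
    simp only [ContinuousLinearMap.coe_coe] at h0
    rw [eU, eU, inner_mk2, inner_mk2] at h0
    simpa using h0
  -- ‖A‖ ≤ 1
  have hAnorm : ∀ h : H, ‖A h‖ ≤ ‖h‖ := by
    intro h
    have hnu : ‖mk2 (0 : N) h‖ = ‖h‖ := by
      have h0 := norm_mk2_sq (0 : N) h
      simp only [norm_zero] at h0
      exact sq_eq_norm_aux (norm_nonneg _) (norm_nonneg _) (by linarith [h0])
    have h1 : ‖U (mk2 (0 : N) h)‖ ≤ ‖h‖ := by
      calc ‖U (mk2 (0 : N) h)‖ ≤ ‖U‖ * ‖mk2 (0 : N) h‖ := le_opNorm _ _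
        _ ≤ 1 * ‖mk2 (0 : N) h‖ := mul_le_mul_of_nonneg_right hUc (norm_nonneg _)
        _ = ‖h‖ := by rw [one_mul, hnu]
    have h2 : ‖A h‖ ^ 2 ≤ ‖U (mk2 (0 : N) h)‖ ^ 2 := by
      have he : U (mk2 (0 : N) h) = mk2 (C h) (A h) := by rw [eU]; simp
      rw [he, norm_mk2_sq]
      nlinarith [norm_nonneg (C h)]
    refine sq_le_norm_aux (norm_nonneg _) (norm_nonneg _) ?_
    calc ‖A h‖ ^ 2 ≤ ‖U (mk2 (0 : N) h)‖ ^ 2 := h2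
      _ ≤ ‖h‖ ^ 2 := by nlinarith [norm_nonneg (U (mk2 (0 : N) h)), norm_nonneg h]
  have hxA : ‖(x : ℂ) • A‖ < 1 := by
    rw [norm_smul, Complex.norm_real, Real.norm_eq_abs]
    calc |x| * ‖A‖ ≤ |x| * 1 := by
          refine mul_le_mul_of_nonneg_left ?_ (abs_nonneg x)
          exact opNorm_le_bound A zero_le_one (by simpa using hAnorm)
      _ < 1 := by simpa using hxabs
  have hUnit : IsUnit (1 - (x : ℂ) • A) := (Units.oneSub _ hxA).isUnit
  set T := Ring.inverse (1 - (x : ℂ) • A) with hT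
  have hTinv : (1 - (x : ℂ) • A) * T = 1 := Ring.mul_inverse_cancel _ hUnit
  have hsa1 : IsSelfAdjoint (1 - (x : ℂ) • A) := by
    rw [IsSelfAdjoint, star_sub, star_one, star_smul, hA.star_eq]
    simp [Complex.conj_ofReal]
  have hTsa : IsSelfAdjoint T := by
    rw [IsSelfAdjoint, hT, ← Ring.inverse_star, hsa1.star_eq]
  have hcomp : IsSelfAdjoint (C ∘L T ∘L adjoint C) := by
    rw [IsSelfAdjoint, star_eq_adjoint, adjoint_comp, adjoint_comp, adjoint_adjoint,
      ← star_eq_adjoint, hTsa.star_eq]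
    rfl
  have hΘsa : IsSelfAdjoint (D + (x : ℂ) • (C ∘L T ∘L adjoint C)) := by
    rw [IsSelfAdjoint, star_add, hD.star_eq, star_smul, hcomp.star_eq]
    norm_num [Complex.conj_ofReal]
  refine ⟨hΘsa, ?_⟩
  set Θ := D + (x : ℂ) • (C ∘L T ∘L adjoint C) with hΘ
  refine opNorm_le_bound _ zero_le_one ?_
  intro n
  rw [one_mul]
  set w : H := T (adjoint C n) with hw
  set h : H := (x : ℂ) • w with hh
  have hkey : (x : ℂ) • (adjoint C n + A h) = h := by
    have h1 : (1 - (x : ℂ) • A) w = adjoint C n := by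
      have := congrArg (fun S : H →L[ℂ] H => S (adjoint C n)) hTinv
      simpa [mul_apply] using this
    have h2 : w - (x : ℂ) • A w = adjoint C n := by
      simpa [sub_apply, smul_apply] using h1
    calc (x : ℂ) • (adjoint C n + A h)
        = (x : ℂ) • (w - (x : ℂ) • A w) + (x : ℂ) • A ((x : ℂ) • w) := by
          rw [h2, hh, smul_add]
      _ = (x : ℂ) • w := by rw [map_smul]; module
      _ = h := rfl
  have hΘn : Θ n = D n + C h := by
    rw [hΘ]
    simp [hh, hw, map_smul]
  have hUapp : U (mk2 n h) = mk2 (Θ n) (adjoint C n + A h) := by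
    rw [eU, hΘn]
  have hnormU : ‖U (mk2 n h)‖ ≤ ‖mk2 n h‖ := by
    calc ‖U (mk2 n h)‖ ≤ ‖U‖ * ‖mk2 n h‖ := le_opNorm _ _
      _ ≤ 1 * ‖mk2 n h‖ := mul_le_mul_of_nonneg_right hUc (norm_nonneg _)
      _ = ‖mk2 n h‖ := one_mul _
  have hsq : ‖Θ n‖ ^ 2 + ‖adjoint C n + A h‖ ^ 2 ≤ ‖n‖ ^ 2 + ‖h‖ ^ 2 := by
    have e1 : ‖U (mk2 n h)‖ ^ 2 = ‖Θ n‖ ^ 2 + ‖adjoint C n + A h‖ ^ 2 := by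
      rw [hUapp, norm_mk2_sq]
    have e2 : ‖mk2 n h‖ ^ 2 = ‖n‖ ^ 2 + ‖h‖ ^ 2 := norm_mk2_sq n h
    nlinarith [norm_nonneg (U (mk2 n h)), norm_nonneg (mk2 n h)]
  have hh2 : ‖h‖ ^ 2 = |x| ^ 2 * ‖adjoint C n + A h‖ ^ 2 := by
    have : ‖h‖ = |x| * ‖adjoint C n + A h‖ := by
      conv_lhs => rw [← hkey]
      rw [norm_smul, Complex.norm_real, Real.norm_eq_abs]
    rw [this]; ring
  refine sq_le_norm_aux (norm_nonneg _) (norm_nonneg _) ?_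
  have hx2le : |x| ^ 2 ≤ 1 := by nlinarith [abs_nonneg x]
  nlinarith [sq_nonneg ‖adjoint C n + A h‖]
end
end
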